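/- Let H be an m×m Hankel matrix over a field (constant skew diagonals, H = (h_{i+j-1})) of rank at most r < m. Then there exists a nonzero vector y = (y_1,...,y_{r+1}) such that for each k = 0,...,m-r-1, the vector obtained by placing y in positions k+1,...,k+r+1 (and zeros elsewhere) lies in the kernel of H; equivalently, the m-r columns of the banded m×(m-r) matrix Y(y) built from y all lie in ker H. -/
import Mathlib

open Matrix Module

section HankelAux

variable {F : Type*} [Field F]

/-- A family of vectors with strictly increasing "leading positions" is
linearly independent. -/
private lemma tri_indep {m s : ℕ} (v : Fin s → (Fin m → F)) (p : Fin s → Fin m)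
    (hp : StrictMono p) (h1 : ∀ k, v k (p k) ≠ 0)
    (h2 : ∀ k i, (i : Fin m) < p k → v k i = 0) :
    LinearIndependent F v := by
  rw [Fintype.linearIndependent_iff]
  intro g hg
  suffices hall : ∀ n : ℕ, ∀ j : Fin s, (j : ℕ) < n → g j = 0 by
    intro i; exact hall (s + 1) i (by omega)
  intro n
  induction n with
  | zero => intro j hj; omega
  | succ n ih =>
    intro j hj
    rcases Nat.lt_or_ge (j : ℕ) n with hlt | hge
    · exact ih j hlt
    · have hjn : (j : ℕ) = n := by omega
      have := congrFun hg (p j)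
      simp only [Finset.sum_apply, Pi.smul_apply, smul_eq_mul, Pi.zero_apply] at this
      rw [Finset.sum_eq_single j] at this
      · rcases mul_eq_zero.mp this with h | h
        · exact h
        · exact absurd h (h1 j)
      · intro b _ hbj
        rcases lt_or_gt_of_ne hbj with hb | hb
        · rw [ih b (by omega : (b : ℕ) < n), zero_mul]
        · rw [h2 b (p j) (hp hb), mul_zero]
      · simp

/-- A linearly independent family inside the column space of a matrix bounds
the rank from below. -/
private lemma indep_le_rank {m n : ℕ} {ι : Type*} [Fintype ι] (A : Matrix (Fin m) (Fin n) F)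
    (v : ι → (Fin m → F)) (hv : LinearIndependent F v)
    (hr : ∀ k, ∃ x, A.mulVec x = v k) : Fintype.card ι ≤ A.rank := by
  rw [Matrix.rank]
  have hle : Submodule.span F (Set.range v) ≤ LinearMap.range A.mulVecLin := by
    rw [Submodule.span_le]
    rintro _ ⟨k, rfl⟩
    obtain ⟨x, hx⟩ := hr k
    exact ⟨x, hx⟩
  calc Fintype.card ι = finrank F (Submodule.span F (Set.range v)) :=
        (finrank_span_eq_card hv).symm
    _ ≤ finrank F (LinearMap.range A.mulVecLin) := Submodule.finrank_mono hle

private lemma exists_ker {m n : ℕ} (A : Matrix (Fin m) (Fin n) F) (hA : A.rank < n) :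
    ∃ v, v ≠ 0 ∧ A.mulVec v = 0 := by
  have hkerne : LinearMap.ker A.mulVecLin ≠ ⊥ := by
    intro hbot
    have := LinearMap.finrank_range_add_finrank_ker A.mulVecLin
    rw [hbot, finrank_bot, add_zero, finrank_pi, Fintype.card_fin] at this
    rw [Matrix.rank] at hA
    omega
  obtain ⟨v, hv, hv0⟩ := Submodule.ne_bot_iff _ |>.mp hkerne
  exact ⟨v, hv0, hv⟩

private lemma dsum {s M : ℕ} (hsM : s ≤ M) (b : Fin s → F) (f : ℕ → F) :
    ∑ t ∈ Finset.range M, (if ht : t < s then b ⟨t, ht⟩ else 0) * f t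
      = ∑ t : Fin s, b t * f t.1 := by
  have h1 : ∑ t ∈ Finset.range s, (if ht : t < s then b ⟨t, ht⟩ else 0) * f t
      = ∑ t ∈ Finset.range M, (if ht : t < s then b ⟨t, ht⟩ else 0) * f t := by
    apply Finset.sum_subset (Finset.range_subset_range.mpr hsM)
    intro x _ hx
    rw [Finset.mem_range] at hx
    rw [dif_neg hx, zero_mul]
  rw [← h1,
    ← Fin.sum_univ_eq_sum_range (fun t => (if ht : t < s then b ⟨t, ht⟩ else 0) * f t) s]
  apply Finset.sum_congr rfl
  intro t _
  simp

private lemma key_aux (m r l : ℕ) (hr : r < m) (h y : ℕ → F) (H : Matrix (Fin m) (Fin m) F)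
    (hH : ∀ i j, H i j = h (i.1 + j.1)) (hrank : H.rank ≤ r) (hlr : l ≤ r)
    (hysupp : ∀ t, y t ≠ 0 → t ≤ l)
    (hyrel : ∀ n, n ≤ m - 1 → ∑ t ∈ Finset.range (r+1), y t * h (n + t) = 0)
    (hRlindep : LinearIndependent F (fun (t : Fin l) (j : Fin m) => h (t.1 + j.1))) :
    ∀ n, n ≤ 2*m - 2 - r → (∑ t ∈ Finset.range (r+1), y t * h (n + t)) = 0 := by
  classical
  set g : ℕ → F := fun n => ∑ t ∈ Finset.range (r + 1), y t * h (n + t) with hg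
  show ∀ n, n ≤ 2*m - 2 - r → g n = 0
  by_contra hcon
  push_neg at hcon
  have hex2 : ∃ N, N ≤ 2*m - 2 - r ∧ g N ≠ 0 ∧ ∀ n, n < N → g n = 0 := by
    refine ⟨Nat.find hcon, (Nat.find_spec hcon).1, (Nat.find_spec hcon).2, ?_⟩
    intro n hn
    by_contra hgn
    have h1 := (Nat.find_spec hcon).1
    exact Nat.find_min hcon hn ⟨by omega, hgn⟩
  obtain ⟨N, hNle, hgN, hgmin⟩ := hex2
  have hmN : m ≤ N := by
    by_contra hmN
    push_neg at hmN
    exact hgN (hyrel N (by omega))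
  have hlm : l < m := by omega
  obtain ⟨ν, hν⟩ : ∃ ν, ν = 2*m - 1 - l - N := ⟨_, rfl⟩
  obtain ⟨c, hc⟩ : ∃ c, c = N + l + 1 - m := ⟨_, rfl⟩
  have hν1 : 1 ≤ ν := by omega
  have hcm : c ≤ m := by omega
  have hcl : l + 1 ≤ c := by omega
  have hcν : c + ν = m := by omega
  -- the truncated matrix
  set T : Matrix (Fin c) (Fin m) F := H.submatrix (fun i => Fin.castLE hcm i) id with hT
  have hTval : ∀ (i : Fin c) (j : Fin m), T i j = h (i.1 + j.1) := by
    intro i j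
    rw [hT, Matrix.submatrix_apply, hH]
    rfl
  have hTrow : ∀ t : Fin l, ∃ x, Tᵀ.mulVec x = (fun (j : Fin m) => h (t.1 + j.1)) := by
    intro t
    have htc : (t : ℕ) < c := by omega
    refine ⟨Pi.single ⟨t.1, htc⟩ 1, ?_⟩
    rw [Matrix.mulVec_single_one]
    funext j
    show T ⟨t.1, htc⟩ j = h (t.1 + j.1)
    rw [hTval]
  have hlrankT : l ≤ T.rank := by
    have h2 := indep_le_rank Tᵀ _ hRlindep hTrow
    rwa [Fintype.card_fin, Matrix.rank_transpose] at h2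
  have hfr : l ≤ finrank F (LinearMap.range T.mulVecLin) := hlrankT
  set bas := Module.finBasis F (LinearMap.range T.mulVecLin) with hbas
  set w1c : Fin l → (Fin c → F) :=
    fun j => (bas (Fin.castLE hfr j) : Fin c → F) with hw1c
  have hw1cindep : LinearIndependent F w1c := by
    have h1 : LinearIndependent F (fun j : Fin l => bas (Fin.castLE hfr j)) :=
      bas.linearIndependent.comp _ (Fin.castLE_injective hfr)
    exact h1.map' (LinearMap.range T.mulVecLin).subtype (Submodule.ker_subtype _)
  have hw1mem : ∀ j, ∃ x, T.mulVec x = w1c j := by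
    intro j
    obtain ⟨x, hx⟩ := LinearMap.mem_range.mp (bas (Fin.castLE hfr j)).2
    exact ⟨x, by rw [← Matrix.mulVecLin_apply, hx, hw1c]⟩
  choose xs hxs using hw1mem
  set w1 : Fin l → (Fin m → F) := fun j => H.mulVec (xs j) with hw1
  set π : ((Fin m → F) →ₗ[F] (Fin c → F)) :=
    LinearMap.funLeft F F (fun i : Fin c => Fin.castLE hcm i) with hπdef
  have hπ : ∀ (x : Fin m → F), π (H.mulVec x) = T.mulVec x := by
    intro x
    funext i
    rw [hπdef, LinearMap.funLeft_apply]
    simp [Matrix.mulVec, dotProduct, hT, Matrix.submatrix_apply]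
  -- the anti-triangular family
  obtain ⟨sh, hsh⟩ : ∃ sh : ℕ → ℕ, ∀ k, sh k = m - 1 - l - k := ⟨_, fun _ => rfl⟩
  set u : Fin ν → (Fin m → F) := fun k i => g (i.1 + sh k.1) with hu
  have hshN : ∀ k : Fin ν, c + k.1 + sh k.1 = N := by
    intro k
    have := k.2
    rw [hsh]
    omega
  have hckm : ∀ k : Fin ν, c + k.1 < m := by
    intro k
    have := k.2
    omega
  have humem : ∀ k : Fin ν, ∃ x, H.mulVec x = u k := by
    intro k
    have hk2 := k.2
    have hshl : sh k.1 + l + 1 ≤ m := by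
      rw [hsh]; omega
    refine ⟨fun j => if sh k.1 ≤ j.1 then y (j.1 - sh k.1) else 0, ?_⟩
    funext i
    have hstep : ∀ j : Fin m,
        H i j * (if sh k.1 ≤ j.1 then y (j.1 - sh k.1) else 0)
          = (fun jn : ℕ => if sh k.1 ≤ jn then y (jn - sh k.1) * h (i.1 + jn) else 0) j.1 := by
      intro j
      by_cases hj : sh k.1 ≤ j.1
      · simp only [hj, if_true, hH]
        ring
      · simp [hj]
    show ∑ j : Fin m, H i j * _ = u k i
    rw [Finset.sum_congr rfl (fun j _ => hstep j),
      Fin.sum_univ_eq_sum_range (fun jn => if sh k.1 ≤ jn then y (jn - sh k.1) * h (i.1 + jn) else 0) m,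
      Finset.range_eq_Ico,
      ← Finset.sum_Ico_consecutive _ (Nat.zero_le (sh k.1)) (by omega : sh k.1 ≤ m)]
    have hzero : ∑ jn ∈ Finset.Ico 0 (sh k.1),
        (if sh k.1 ≤ jn then y (jn - sh k.1) * h (i.1 + jn) else 0) = 0 := by
      apply Finset.sum_eq_zero
      intro jn hjn
      rw [Finset.mem_Ico] at hjn
      rw [if_neg (by omega)]
    rw [hzero, zero_add, Finset.sum_Ico_eq_sum_range]
    have hterm2 : ∀ t ∈ Finset.range (m - sh k.1),
        (if sh k.1 ≤ sh k.1 + t then y (sh k.1 + t - sh k.1) * h (i.1 + (sh k.1 + t)) else 0)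
          = y t * h ((i.1 + sh k.1) + t) := by
      intro t _
      rw [if_pos (Nat.le_add_right _ _), Nat.add_sub_cancel_left]
      congr 2
      omega
    rw [Finset.sum_congr rfl hterm2]
    have hsub1 : ∑ t ∈ Finset.range (m - sh k.1), y t * h ((i.1 + sh k.1) + t)
        = ∑ t ∈ Finset.range (l+1), y t * h ((i.1 + sh k.1) + t) := by
      symm
      apply Finset.sum_subset (Finset.range_subset_range.mpr (by omega))
      intro x _ hx
      rw [Finset.mem_range] at hx
      have : y x = 0 := by
        by_contra hyx
        exact hx (by have := hysupp x hyx; omega)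
      rw [this, zero_mul]
    have hsub2 : ∑ t ∈ Finset.range (r + 1), y t * h ((i.1 + sh k.1) + t)
        = ∑ t ∈ Finset.range (l+1), y t * h ((i.1 + sh k.1) + t) := by
      symm
      apply Finset.sum_subset (Finset.range_subset_range.mpr (by omega))
      intro x _ hx
      rw [Finset.mem_range] at hx
      have : y x = 0 := by
        by_contra hyx
        exact hx (by have := hysupp x hyx; omega)
      rw [this, zero_mul]
    rw [hsub1, hu, hg, ← hsub2]
  have hulead : ∀ (k : Fin ν) (i : Fin m), i.1 < c + k.1 → u k i = 0 := by
    intro k i hi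
    apply hgmin
    have := hshN k
    omega
  set p : Fin ν → Fin m := fun k => ⟨c + k.1, hckm k⟩ with hp
  have hpmono : StrictMono p := by
    intro a b hab
    rw [Fin.lt_def] at hab ⊢
    simp only [hp]
    omega
  have huindep : LinearIndependent F u := by
    apply tri_indep u p hpmono
    · intro k
      have : u k (p k) = g N := by
        rw [hu]
        simp only [hp]
        rw [← hshN k]
      rw [this]
      exact hgN
    · intro k i hik
      rw [Fin.lt_def] at hik
      exact hulead k i hik
  have hw1indep : LinearIndependent F w1 := by
    apply LinearIndependent.of_comp π
    have hcomp : π ∘ w1 = w1c := by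
      funext j
      rw [Function.comp_apply, hw1, hπ, hxs]
    rw [hcomp]
    exact hw1cindep
  have huker : ∀ k, π (u k) = 0 := by
    intro k
    funext i
    rw [hπdef, LinearMap.funLeft_apply]
    show u k (Fin.castLE hcm i) = (0 : Fin c → F) i
    rw [hulead k _ (by simp [Fin.castLE]; omega)]
    rfl
  have hdisj : Disjoint (Submodule.span F (Set.range w1)) (Submodule.span F (Set.range u)) := by
    rw [Submodule.disjoint_def]
    intro z hz1 hz2
    have hzker : π z = 0 := by
      have hle : Submodule.span F (Set.range u) ≤ LinearMap.ker π := by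
        rw [Submodule.span_le]
        rintro _ ⟨k, rfl⟩
        exact LinearMap.mem_ker.mpr (huker k)
      exact LinearMap.mem_ker.mp (hle hz2)
    obtain ⟨a, ha⟩ := (Submodule.mem_span_range_iff_exists_fun F).mp hz1
    have h0 : ∑ j, a j • w1c j = 0 := by
      have := congrArg π ha
      rw [map_sum] at this
      rw [hzker] at this
      rw [← this]
      apply Finset.sum_congr rfl
      intro j _
      rw [_root_.map_smul]
      show a j • w1c j = a j • π (H *ᵥ xs j)
      rw [hπ, hxs]
    have ha0 : ∀ j, a j = 0 := Fintype.linearIndependent_iff.mp hw1cindep a h0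
    rw [← ha]
    apply Finset.sum_eq_zero
    intro j _
    rw [ha0, zero_smul]
  have hsumindep : LinearIndependent F (Sum.elim w1 u) := hw1indep.sum_type huindep hdisj
  have hcard := indep_le_rank H (Sum.elim w1 u) hsumindep ?_
  · rw [Fintype.card_sum, Fintype.card_fin, Fintype.card_fin] at hcard
    omega
  · rintro (j | k)
    · exact ⟨xs j, rfl⟩
    · exact humem k

end HankelAux

/-- Let `H` be an `m × m` Hankel matrix over a field
(`H i j = h (i + j)` for scalars `h 0, …, h (2m-2)`, i.e. constant skew diagonals)
of rank at most `r < m`. Then there exists a nonzero vector `y = (y 0, …, y r)`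
such that for each shift `k = 0, …, m - r - 1`, the vector obtained by placing
`y` in positions `k, …, k + r` (and zeros elsewhere) lies in the kernel of `H`;
equivalently, all `m - r` columns of the banded matrix `Y(y)` lie in `ker H`. -/
theorem hankel_kernel_banded {F : Type*} [Field F] (m r : ℕ) (hr : r < m)
    (h : ℕ → F) (H : Matrix (Fin m) (Fin m) F)
    (hH : ∀ i j, H i j = h (i.1 + j.1))
    (hrank : H.rank ≤ r) :
    ∃ y : Fin (r + 1) → F, y ≠ 0 ∧
      ∀ k : ℕ, k ≤ m - r - 1 →
        H.mulVec (fun j => ∑ i : Fin (r + 1), if j.1 = k + i.1 then y i else 0) = 0 := by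
  classical
  -- Step 1: there is a nonzero window relation of length ≤ r+1 valid on the
  -- first m windows.
  have hPr : ∃ y : ℕ → F, y ≠ 0 ∧ (∀ t, y t ≠ 0 → t ≤ r) ∧
      ∀ n, n ≤ m - 1 → ∑ t ∈ Finset.range (r + 1), y t * h (n + t) = 0 := by
    set S : Matrix (Fin m) (Fin (r+1)) F := fun j t => if (j : ℕ) = (t : ℕ) then 1 else 0 with hS
    have hBrank : (H * S).rank ≤ r := le_trans (Matrix.rank_mul_le_left H S) hrank
    obtain ⟨v, hv0, hvk⟩ := exists_ker (H * S) (by omega)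
    have hBel : ∀ (i : Fin m) (t : Fin (r+1)), (H * S) i t = h (i.1 + t.1) := by
      intro i t
      have htm : (t : ℕ) < m := by omega
      rw [Matrix.mul_apply, Finset.sum_eq_single (⟨t.1, htm⟩ : Fin m)]
      · rw [hH, hS]
        simp
      · intro b _ hb
        have hbne : (b : ℕ) ≠ (t : ℕ) := by
          intro hc
          exact hb (Fin.ext hc)
        rw [hS]
        simp [hbne]
      · simp
    refine ⟨fun t => if ht : t < r + 1 then v ⟨t, ht⟩ else 0, ?_, ?_, ?_⟩
    · obtain ⟨t, ht⟩ := Function.ne_iff.mp hv0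
      intro heq
      have h2 := congrFun heq t.1
      simp only [t.2, dif_pos, Fin.eta, Pi.zero_apply] at h2
      exact ht h2
    · intro t hyt
      by_contra hgt
      push_neg at hgt
      simp only [dif_neg (show ¬ t < r + 1 by omega)] at hyt
      exact hyt rfl
    · intro n hn
      have hnm : n < m := by omega
      rw [dsum (le_refl (r+1)) v (fun t => h (n + t))]
      have h2 := congrFun hvk ⟨n, hnm⟩
      rw [Matrix.mulVec, dotProduct] at h2
      simp only [Pi.zero_apply] at h2
      rw [← h2]
      apply Finset.sum_congr rfl
      intro t _
      rw [hBel, mul_comm]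
  -- Step 2: take a relation of minimal length.
  have hPex : ∃ l : ℕ, ∃ y : ℕ → F, y ≠ 0 ∧ (∀ t, y t ≠ 0 → t ≤ l) ∧
      ∀ n, n ≤ m - 1 → ∑ t ∈ Finset.range (r + 1), y t * h (n + t) = 0 := ⟨r, hPr⟩
  have hlr : Nat.find hPex ≤ r := Nat.find_min' hPex hPr
  obtain ⟨y, hy0, hysupp, hyrel⟩ := Nat.find_spec hPex
  -- Step 3: by minimality, the first `l` rows of `H` are linearly independent.
  have hRlindep : LinearIndependent F
      (fun (t : Fin (Nat.find hPex)) (j : Fin m) => h (t.1 + j.1)) := by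
    rw [Fintype.linearIndependent_iff]
    intro b hb i0
    by_contra hbi0
    have hl1 : 1 ≤ Nat.find hPex := by have := i0.2; omega
    apply Nat.find_min hPex (show Nat.find hPex - 1 < Nat.find hPex by omega)
    refine ⟨fun t => if ht : t < Nat.find hPex then b ⟨t, ht⟩ else 0, ?_, ?_, ?_⟩
    · intro heq
      have h2 := congrFun heq i0.1
      simp only [i0.2, dif_pos, Fin.eta, Pi.zero_apply] at h2
      exact hbi0 h2
    · intro t hyt
      by_contra hgt
      push_neg at hgt
      simp only [dif_neg (show ¬ t < Nat.find hPex by omega)] at hyt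
      exact hyt rfl
    · intro n hn
      have hnm : n < m := by omega
      rw [dsum (by omega : Nat.find hPex ≤ r + 1) b (fun t => h (n + t))]
      have h2 := congrFun hb ⟨n, hnm⟩
      simp only [Finset.sum_apply, Pi.smul_apply, smul_eq_mul, Pi.zero_apply] at h2
      calc ∑ t : Fin (Nat.find hPex), b t * h (n + t.1)
          = ∑ t : Fin (Nat.find hPex), b t * h (t.1 + n) :=
            Finset.sum_congr rfl (fun t _ => by rw [add_comm n t.1])
        _ = 0 := h2
  -- Step 4: the key vanishing claim.
  have key := key_aux m r (Nat.find hPex) hr h y H hH hrank hlr hysupp hyrel hRlindep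
  -- Step 5: assembly.
  refine ⟨fun i => y i.1, ?_, ?_⟩
  · obtain ⟨t, hyt⟩ := Function.ne_iff.mp hy0
    have htl : t ≤ r := le_trans (hysupp t hyt) hlr
    intro heq
    exact hyt (congrFun heq ⟨t, by omega⟩)
  · intro k hk
    funext i
    simp only [Matrix.mulVec, dotProduct, Pi.zero_apply]
    have hswap : ∑ j : Fin m, H i j * (∑ t : Fin (r+1), if j.1 = k + t.1 then y t.1 else 0)
        = ∑ t : Fin (r+1), ∑ j : Fin m, (if j.1 = k + t.1 then H i j * y t.1 else 0) := by
      rw [Finset.sum_comm]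
      congr 1; funext j
      rw [Finset.mul_sum]
      congr 1; funext t
      by_cases hjt : j.1 = k + t.1 <;> simp [hjt]
    rw [hswap]
    have hterm : ∀ t : Fin (r+1), (∑ j : Fin m, if j.1 = k + t.1 then H i j * y t.1 else 0)
        = y t.1 * h (i.1 + k + t.1) := by
      intro t
      have ht2 : (t : ℕ) < r + 1 := t.2
      have hmr : r < m := hr
      have hktm : k + t.1 < m := by omega
      rw [Finset.sum_eq_single (⟨k + t.1, hktm⟩ : Fin m)]
      · rw [if_pos rfl, hH, mul_comm]
        simp only [Fin.val_mk]
        rw [add_assoc]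
      · intro b _ hb
        have : b.1 ≠ k + t.1 := fun hc => hb (Fin.ext hc)
        simp [this]
      · simp
    rw [Finset.sum_congr rfl (fun t _ => hterm t),
      Fin.sum_univ_eq_sum_range (fun t => y t * h (i.1 + k + t))]
    exact key _ (by omega)
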